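/- The Verlet map is second-order accurate for Hamilton's equations: for every radius ρ > 0 there exists a constant C > 0 (depending on ν, M, K and ρ) such that for all h ∈ (0,1], all (q,p) ∈ ℝ^ν × ℝ^ν with ‖q‖ + ‖p‖ ≤ ρ, and every continuously differentiable curve (Q,P) : [0,h] → ℝ^ν × ℝ^ν satisfying Q' = M⁻¹P, P' = −∇U(Q), Q(0) = q, P(0) = p, one has ‖Φ_h(q,p) − (Q(h), P(h))‖ ≤ C h³. -/

import Mathlib

open MeasureTheory Matrix

/-- The gradient of `U : ℝ^ν → ℝ` in the standard basis. -/
noncomputable def grad {ν : ℕ} (U : (Fin ν → ℝ) → ℝ) (q : Fin ν → ℝ) : Fin ν → ℝ :=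
  fun i => fderiv ℝ U q (Pi.single i 1)

/-- One step of the Verlet integrator with stepsize `h`, mass matrix `M` and
potential `U`. -/
noncomputable def verlet {ν : ℕ} (h : ℝ) (M : Matrix (Fin ν) (Fin ν) ℝ)
    (U : (Fin ν → ℝ) → ℝ) (x : (Fin ν → ℝ) × (Fin ν → ℝ)) :
    (Fin ν → ℝ) × (Fin ν → ℝ) :=
  let phalf := x.2 - (h / 2) • grad U x.1
  let q₁ := x.1 + h • (M⁻¹).mulVec phalf
  (q₁, phalf - (h / 2) • grad U q₁)

/-- Mean value inequality on all of `ℝ^n`. -/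
lemma aux_lip {F : Type*} [NormedAddCommGroup F] [NormedSpace ℝ F] {n : ℕ}
    {f : (Fin n → ℝ) → F} {C : ℝ} (hf : Differentiable ℝ f)
    (hC : ∀ x, ‖fderiv ℝ f x‖ ≤ C) (x y : Fin n → ℝ) :
    ‖f x - f y‖ ≤ C * ‖x - y‖ :=
  Convex.norm_image_sub_le_of_norm_fderiv_le (fun z _ => hf z) (fun z _ => hC z)
    convex_univ (Set.mem_univ y) (Set.mem_univ x)

set_option maxHeartbeats 2000000 in
/-- The Verlet map is second-order accurate for Hamilton's equations: the
one-step error relative to the exact flow is of order `h³`. -/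
theorem verlet_second_order_accurate
    (ν : ℕ) (M : Matrix (Fin ν) (Fin ν) ℝ) (hM : M.PosDef)
    (U : (Fin ν → ℝ) → ℝ) (hU : ContDiff ℝ 3 U)
    (K : ℝ) (hK : 0 < K)
    (hD1 : ∀ q, ‖iteratedFDeriv ℝ 1 U q‖ ≤ K)
    (hD2 : ∀ q, ‖iteratedFDeriv ℝ 2 U q‖ ≤ K)
    (hD3 : ∀ q, ‖iteratedFDeriv ℝ 3 U q‖ ≤ K) :
    ∀ ρ : ℝ, 0 < ρ → ∃ C : ℝ, 0 < C ∧
      ∀ h ∈ Set.Ioc (0 : ℝ) 1, ∀ q p : Fin ν → ℝ, ‖q‖ + ‖p‖ ≤ ρ →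
        ∀ Q P : ℝ → (Fin ν → ℝ),
          (∀ t ∈ Set.Icc (0 : ℝ) h, HasDerivAt Q ((M⁻¹).mulVec (P t)) t) →
          (∀ t ∈ Set.Icc (0 : ℝ) h, HasDerivAt P (-(grad U (Q t))) t) →
          Q 0 = q → P 0 = p →
          ‖verlet h M U (q, p) - (Q h, P h)‖ ≤ C * h ^ 3 := by
  intro ρ hρ
  -- the coordinate-evaluation map and the gradient as a composition
  obtain ⟨T, hT⟩ : ∃ T : ((Fin ν → ℝ) →L[ℝ] ℝ) →L[ℝ] (Fin ν → ℝ),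
      T = ContinuousLinearMap.pi (fun i => ContinuousLinearMap.apply ℝ ℝ (Pi.single i 1)) :=
    ⟨_, rfl⟩
  have hgrad : ∀ x, grad U x = T (fderiv ℝ U x) := by intro x; rw [hT]; rfl
  have hTnorm : ∀ L : (Fin ν → ℝ) →L[ℝ] ℝ, ‖T L‖ ≤ ‖L‖ := by
    intro L
    rw [hT]
    refine (pi_norm_le_iff_of_nonneg (norm_nonneg L)).mpr fun i => ?_
    have h1 : ‖Pi.single (M := fun _ : Fin ν => ℝ) i 1‖ = 1 := by
      rw [Pi.norm_single]; exact norm_one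
    have h2 := L.le_opNorm (Pi.single i (1:ℝ))
    rw [h1, mul_one] at h2
    exact h2
  -- the mass matrix inverse as a continuous linear map
  obtain ⟨A, hA⟩ : ∃ A : (Fin ν → ℝ) →L[ℝ] (Fin ν → ℝ),
      A = LinearMap.toContinuousLinearMap (Matrix.mulVecLin M⁻¹) := ⟨_, rfl⟩
  have hAv : ∀ v, A v = (M⁻¹).mulVec v := by intro v; rw [hA]; rfl
  obtain ⟨a, ha⟩ : ∃ a : ℝ, a = ‖A‖ := ⟨_, rfl⟩
  have hAop : ∀ v : Fin ν → ℝ, ‖A v‖ ≤ a * ‖v‖ := fun v => by rw [ha]; exact A.le_opNorm v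
  have ha0 : 0 ≤ a := ha ▸ norm_nonneg _
  -- smoothness of the derivatives of U
  have hU2 : ContDiff ℝ 2 (fderiv ℝ U) := hU.fderiv_right (by norm_num)
  have hU1 : ContDiff ℝ 1 (fderiv ℝ (fderiv ℝ U)) := hU2.fderiv_right (by norm_num)
  have hdU : Differentiable ℝ (fderiv ℝ U) := hU2.differentiable (by norm_num)
  have hddU : Differentiable ℝ (fderiv ℝ (fderiv ℝ U)) := hU1.differentiable one_ne_zero
  letI : NormedAddCommGroup ((Fin ν → ℝ) →L[ℝ] (Fin ν → ℝ) →L[ℝ] ℝ) :=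
    ContinuousLinearMap.toNormedAddCommGroup
  letI : NormedSpace ℝ ((Fin ν → ℝ) →L[ℝ] (Fin ν → ℝ) →L[ℝ] ℝ) :=
    ContinuousLinearMap.toNormedSpace
  -- norm bounds on the derivatives of U
  have hn1 : ∀ x, ‖fderiv ℝ U x‖ ≤ K := by
    intro x
    calc ‖fderiv ℝ U x‖ = ‖iteratedFDeriv ℝ 0 (fderiv ℝ U) x‖ := (norm_iteratedFDeriv_zero).symm
      _ = ‖iteratedFDeriv ℝ 1 U x‖ := norm_iteratedFDeriv_fderiv
      _ ≤ K := hD1 x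
  have hn2 : ∀ x, ‖fderiv ℝ (fderiv ℝ U) x‖ ≤ K := by
    intro x
    calc ‖fderiv ℝ (fderiv ℝ U) x‖
        = ‖iteratedFDeriv ℝ 0 (fderiv ℝ (fderiv ℝ U)) x‖ := (norm_iteratedFDeriv_zero).symm
      _ = ‖iteratedFDeriv ℝ 1 (fderiv ℝ U) x‖ := norm_iteratedFDeriv_fderiv
      _ = ‖iteratedFDeriv ℝ 2 U x‖ := norm_iteratedFDeriv_fderiv
      _ ≤ K := hD2 x
  have hn3 : ∀ x, ‖fderiv ℝ (fderiv ℝ (fderiv ℝ U)) x‖ ≤ K := by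
    intro x
    calc ‖fderiv ℝ (fderiv ℝ (fderiv ℝ U)) x‖
        = ‖iteratedFDeriv ℝ 0 (fderiv ℝ (fderiv ℝ (fderiv ℝ U))) x‖ :=
          (norm_iteratedFDeriv_zero).symm
      _ = ‖iteratedFDeriv ℝ 1 (fderiv ℝ (fderiv ℝ U)) x‖ := norm_iteratedFDeriv_fderiv
      _ = ‖iteratedFDeriv ℝ 2 (fderiv ℝ U) x‖ := norm_iteratedFDeriv_fderiv
      _ = ‖iteratedFDeriv ℝ 3 U x‖ := norm_iteratedFDeriv_fderiv
      _ ≤ K := hD3 x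
  -- basic facts about the gradient
  have hg_bd : ∀ x, ‖grad U x‖ ≤ K := fun x => by
    rw [hgrad x]; exact (hTnorm _).trans (hn1 x)
  have hg_lip : ∀ x y, ‖grad U x - grad U y‖ ≤ K * ‖x - y‖ := by
    intro x y
    rw [hgrad x, hgrad y, ← map_sub]
    exact (hTnorm _).trans (aux_lip hdU hn2 x y)
  -- derivative of the gradient
  obtain ⟨Dg, hDg⟩ : ∃ Dg : (Fin ν → ℝ) → ((Fin ν → ℝ) →L[ℝ] (Fin ν → ℝ)),
      Dg = fun x => T.comp (fderiv ℝ (fderiv ℝ U) x) := ⟨_, rfl⟩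
  have hg_deriv : ∀ x, HasFDerivAt (grad U) (Dg x) x := by
    intro x
    have h1 : HasFDerivAt (fun y => T (fderiv ℝ U y)) (T.comp (fderiv ℝ (fderiv ℝ U) x)) x :=
      T.hasFDerivAt.comp x (hdU x).hasFDerivAt
    have h2 : grad U = fun y => T (fderiv ℝ U y) := funext hgrad
    rw [h2, hDg]
    exact h1
  have hTcomp : ∀ (E' : (Fin ν → ℝ) →L[ℝ] ((Fin ν → ℝ) →L[ℝ] ℝ)), ‖T.comp E'‖ ≤ ‖E'‖ :=
    fun E' => ContinuousLinearMap.opNorm_le_bound _ (norm_nonneg E')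
      (fun v => (hTnorm (E' v)).trans (E'.le_opNorm v))
  have hDg_bd : ∀ x, ‖Dg x‖ ≤ K := fun x => by rw [hDg]; exact (hTcomp _).trans (hn2 x)
  have hDg_lip : ∀ x y, ‖Dg x - Dg y‖ ≤ K * ‖x - y‖ := by
    intro x y
    have hsub : Dg x - Dg y = T.comp (fderiv ℝ (fderiv ℝ U) x - fderiv ℝ (fderiv ℝ U) y) := by
      rw [hDg]; exact (ContinuousLinearMap.comp_sub _ _ _).symm
    rw [hsub]
    exact (hTcomp _).trans (aux_lip hddU hn3 x y)
  have hgdiff : Differentiable ℝ (grad U) := fun x => (hg_deriv x).differentiableAt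
  have hgc : Continuous (grad U) := hgdiff.continuous
  have hDgc : Continuous Dg := by
    have hl : LipschitzWith (Real.toNNReal K) Dg := by
      apply LipschitzWith.of_dist_le_mul
      intro x y
      rw [dist_eq_norm, dist_eq_norm, Real.coe_toNNReal K hK.le]
      exact hDg_lip x y
    exact hl.continuous
  -- the constants
  obtain ⟨B, hB⟩ : ∃ B : ℝ, B = ρ + K := ⟨_, rfl⟩
  have hB0 : 0 < B := by rw [hB]; positivity
  obtain ⟨Lc, hLc⟩ : ∃ Lc : ℝ, Lc = K * a^2 * B^2 + K^2 * a := ⟨_, rfl⟩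
  have hLc0 : 0 ≤ Lc := by rw [hLc]; positivity
  refine ⟨K * a^2 * B + Lc + K^2 * a^2 * B + 1, by positivity, ?_⟩
  intro h hh q p hqp Q P hQ hP hQ0 hP0
  obtain ⟨hh0, hh1⟩ := hh
  have hh0' : (0:ℝ) ≤ h := hh0.le
  have h0mem : (0:ℝ) ∈ Set.Icc (0:ℝ) h := ⟨le_refl _, hh0'⟩
  have hhmem : h ∈ Set.Icc (0:ℝ) h := ⟨hh0', le_refl _⟩
  have huIcc : Set.uIcc (0:ℝ) h = Set.Icc (0:ℝ) h := Set.uIcc_of_le hh0'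
  have hp_norm : ‖p‖ ≤ ρ := le_trans (le_add_of_nonneg_left (norm_nonneg q)) hqp
  -- continuity of the solution curves
  have hQcont : ContinuousOn Q (Set.Icc (0:ℝ) h) :=
    fun t ht => (hQ t ht).continuousAt.continuousWithinAt
  have hPcont : ContinuousOn P (Set.Icc (0:ℝ) h) :=
    fun t ht => (hP t ht).continuousAt.continuousWithinAt
  have hgQcont : ContinuousOn (fun s => grad U (Q s)) (Set.Icc (0:ℝ) h) :=
    hgc.comp_continuousOn hQcont
  -- bounds along the flow
  have hPdiff : ∀ s ∈ Set.Icc (0:ℝ) h, ∀ t ∈ Set.Icc (0:ℝ) h, ‖P s - P t‖ ≤ K * ‖s - t‖ := by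
    intro s hs t ht
    refine Convex.norm_image_sub_le_of_norm_hasDerivWithin_le
      (fun u hu => (hP u hu).hasDerivWithinAt) (fun u hu => ?_) (convex_Icc 0 h) ht hs
    rw [norm_neg]; exact hg_bd _
  have hPb : ∀ t ∈ Set.Icc (0:ℝ) h, ‖P t‖ ≤ B := by
    intro t ht
    have h1 := hPdiff t ht 0 h0mem
    rw [hP0] at h1
    have h2 : ‖t - 0‖ ≤ 1 := by
      rw [sub_zero, Real.norm_eq_abs, abs_of_nonneg ht.1]
      exact ht.2.trans hh1
    have h3 : ‖P t - p‖ ≤ K := by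
      calc ‖P t - p‖ ≤ K * ‖t - 0‖ := h1
        _ ≤ K * 1 := mul_le_mul_of_nonneg_left h2 hK.le
        _ = K := mul_one K
    calc ‖P t‖ = ‖(P t - p) + p‖ := by rw [sub_add_cancel]
      _ ≤ ‖P t - p‖ + ‖p‖ := norm_add_le _ _
      _ ≤ K + ρ := add_le_add h3 hp_norm
      _ = B := by rw [hB]; ring
  have hQdiff : ∀ s ∈ Set.Icc (0:ℝ) h, ∀ t ∈ Set.Icc (0:ℝ) h,
      ‖Q s - Q t‖ ≤ (a * B) * ‖s - t‖ := by
    intro s hs t ht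
    refine Convex.norm_image_sub_le_of_norm_hasDerivWithin_le
      (fun u hu => (hQ u hu).hasDerivWithinAt) (fun u hu => ?_) (convex_Icc 0 h) ht hs
    rw [← hAv]
    calc ‖A (P u)‖ ≤ a * ‖P u‖ := hAop _
      _ ≤ a * B := mul_le_mul_of_nonneg_left (hPb u hu) ha0
  -- fundamental theorem of calculus for P
  have p_sub : ∀ t ∈ Set.Icc (0:ℝ) h, p - P t = ∫ s in (0:ℝ)..t, grad U (Q s) := by
    intro t ht
    have hsub : Set.uIcc (0:ℝ) t ⊆ Set.Icc (0:ℝ) h := by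
      rw [Set.uIcc_of_le ht.1]; exact Set.Icc_subset_Icc le_rfl ht.2
    have hint : IntervalIntegrable (fun s => -(grad U (Q s))) volume 0 t :=
      ((hgQcont.mono hsub).neg).intervalIntegrable
    have hftc := intervalIntegral.integral_eq_sub_of_hasDerivAt
      (fun s hs => hP s (hsub hs)) hint
    rw [intervalIntegral.integral_neg, hP0] at hftc
    have h2 := congrArg Neg.neg hftc
    rw [neg_neg, neg_sub] at h2
    exact h2.symm
  -- fundamental theorem of calculus for Q
  have hAPcont : ContinuousOn (fun t => A (P t)) (Set.Icc (0:ℝ) h) :=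
    A.continuous.comp_continuousOn hPcont
  have int_AP : IntervalIntegrable (fun t => A (P t)) volume 0 h :=
    (hAPcont.mono huIcc.subset).intervalIntegrable
  have hQFTC : ∫ t in (0:ℝ)..h, A (P t) = Q h - q := by
    rw [← hQ0]
    refine intervalIntegral.integral_eq_sub_of_hasDerivAt (fun t ht => ?_) int_AP
    rw [hAv]
    exact hQ t (huIcc ▸ ht)
  -- the Verlet step
  obtain ⟨phalf, hphalf⟩ : ∃ v : Fin ν → ℝ, v = p - (h/2) • grad U q := ⟨_, rfl⟩
  obtain ⟨q1, hq1⟩ : ∃ v : Fin ν → ℝ, v = q + h • A phalf := ⟨_, rfl⟩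
  obtain ⟨p1, hp1⟩ : ∃ v : Fin ν → ℝ, v = phalf - (h/2) • grad U q1 := ⟨_, rfl⟩
  have hver : verlet h M U (q, p) = (q1, p1) := by
    rw [hp1, hq1, hphalf, hAv]
    rfl
  -- the error of the position update
  obtain ⟨Efun, hE⟩ : ∃ F : ℝ → (Fin ν → ℝ), F = fun t => (p - P t) - t • grad U q := ⟨_, rfl⟩
  have hEcont : ContinuousOn Efun (Set.Icc (0:ℝ) h) := by
    rw [hE]
    exact (continuousOn_const.sub hPcont).sub (continuousOn_id.smul continuousOn_const)
  have hEval : ∀ t ∈ Set.Icc (0:ℝ) h,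
      Efun t = ∫ s in (0:ℝ)..t, (grad U (Q s) - grad U q) := by
    intro t ht
    have hsub : Set.uIcc (0:ℝ) t ⊆ Set.Icc (0:ℝ) h := by
      rw [Set.uIcc_of_le ht.1]; exact Set.Icc_subset_Icc le_rfl ht.2
    have i1 : IntervalIntegrable (fun s => grad U (Q s)) volume 0 t :=
      (hgQcont.mono hsub).intervalIntegrable
    rw [intervalIntegral.integral_sub i1 intervalIntegrable_const, ← p_sub t ht,
      intervalIntegral.integral_const, hE]
    simp
  have hEbd : ∀ t ∈ Set.Icc (0:ℝ) h, ‖Efun t‖ ≤ K * (a * B) * h * h := by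
    intro t ht
    rw [hEval t ht]
    have hbd : ∀ s ∈ Set.uIoc (0:ℝ) t, ‖grad U (Q s) - grad U q‖ ≤ K * (a*B) * h := by
      intro s hs
      rw [Set.uIoc_of_le ht.1] at hs
      have hs' : s ∈ Set.Icc (0:ℝ) h := ⟨hs.1.le, hs.2.trans ht.2⟩
      have h2 : ‖Q s - q‖ ≤ (a*B) * ‖s - 0‖ := by
        rw [← hQ0]; exact hQdiff s hs' 0 h0mem
      have h3 : ‖s - 0‖ ≤ h := by
        rw [sub_zero, Real.norm_eq_abs, abs_of_nonneg hs'.1]; exact hs'.2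
      calc ‖grad U (Q s) - grad U q‖ ≤ K * ‖Q s - q‖ := hg_lip _ _
        _ ≤ K * ((a*B) * ‖s - 0‖) := mul_le_mul_of_nonneg_left h2 hK.le
        _ ≤ K * ((a*B) * h) :=
          mul_le_mul_of_nonneg_left
            (mul_le_mul_of_nonneg_left h3 (by positivity)) hK.le
        _ = K * (a*B) * h := by ring
    have hle := intervalIntegral.norm_integral_le_of_norm_le_const hbd
    have h4 : |t - 0| ≤ h := by
      rw [sub_zero, abs_of_nonneg ht.1]; exact ht.2
    calc ‖∫ s in (0:ℝ)..t, (grad U (Q s) - grad U q)‖ ≤ K * (a*B) * h * |t - 0| := hle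
      _ ≤ K * (a*B) * h * h := by
        refine mul_le_mul_of_nonneg_left h4 ?_
        positivity
      _ = K * (a * B) * h * h := by ring
  -- the key identity for the position error
  have int_phP : IntervalIntegrable (fun t => phalf - P t) volume 0 h :=
    ((continuousOn_const.sub hPcont).mono huIcc.subset).intervalIntegrable
  have key0 : q1 - Q h = ∫ t in (0:ℝ)..h, (A phalf - A (P t)) := by
    rw [intervalIntegral.integral_sub intervalIntegrable_const int_AP,
      intervalIntegral.integral_const, hQFTC, hq1, sub_zero]
    abel
  have key1 : q1 - Q h = A (∫ t in (0:ℝ)..h, (phalf - P t)) := by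
    rw [key0, ← ContinuousLinearMap.intervalIntegral_comp_comm A int_phP]
    exact intervalIntegral.integral_congr (fun t _ => (map_sub A _ _).symm)
  have hEint : IntervalIntegrable Efun volume 0 h :=
    (hEcont.mono huIcc.subset).intervalIntegrable
  have htcont : Continuous (fun t : ℝ => (t - h/2) • grad U q) := by
    exact ((continuous_id'.sub continuous_const).smul continuous_const)
  have htint : IntervalIntegrable (fun t => (t - h/2) • grad U q) volume 0 h :=
    htcont.intervalIntegrable 0 h
  have hIeq : ∫ t in (0:ℝ)..h, (phalf - P t) = ∫ t in (0:ℝ)..h, Efun t := by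
    have hcong : Set.EqOn (fun t => phalf - P t)
        (fun t => Efun t + (t - h/2) • grad U q) (Set.uIcc (0:ℝ) h) := by
      intro t _
      simp only [hE, hphalf]
      rw [sub_smul]
      abel
    rw [intervalIntegral.integral_congr hcong, intervalIntegral.integral_add hEint htint]
    have hzero : (∫ t in (0:ℝ)..h, (t - h/2) • grad U q) = 0 := by
      rw [intervalIntegral.integral_smul_const]
      have hz : (∫ t in (0:ℝ)..h, (t - h/2)) = 0 := by
        rw [intervalIntegral.integral_sub
          ((continuous_id' : Continuous fun x : ℝ => x).intervalIntegrable 0 h)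
          intervalIntegrable_const, integral_id,
          intervalIntegral.integral_const]
        simp only [smul_eq_mul]
        ring
      rw [hz, zero_smul]
    rw [hzero, add_zero]
  have hcomp1 : ‖q1 - Q h‖ ≤ (K * a^2 * B) * h^3 := by
    rw [key1, hIeq]
    have h4 : ‖∫ t in (0:ℝ)..h, Efun t‖ ≤ (K * (a*B) * h * h) * |h - 0| := by
      refine intervalIntegral.norm_integral_le_of_norm_le_const (fun s hs => ?_)
      rw [Set.uIoc_of_le hh0'] at hs
      exact hEbd s ⟨hs.1.le, hs.2⟩
    rw [sub_zero, abs_of_nonneg hh0'] at h4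
    calc ‖A (∫ t in (0:ℝ)..h, Efun t)‖ ≤ a * ‖∫ t in (0:ℝ)..h, Efun t‖ := hAop _
      _ ≤ a * ((K * (a*B) * h * h) * h) := mul_le_mul_of_nonneg_left h4 ha0
      _ = (K * a^2 * B) * h^3 := by ring
  -- the trapezoidal estimate for the momentum error
  obtain ⟨G', hG'def⟩ : ∃ G' : ℝ → (Fin ν → ℝ), G' = fun t => Dg (Q t) (A (P t)) := ⟨_, rfl⟩
  have hG : ∀ t ∈ Set.Icc (0:ℝ) h, HasDerivAt (fun u => grad U (Q u)) (G' t) t := by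
    intro t ht
    have := (hg_deriv (Q t)).comp_hasDerivAt t (hQ t ht)
    simp only [hG'def, hAv]
    exact this
  have hG'cont : ContinuousOn G' (Set.Icc (0:ℝ) h) := by
    rw [hG'def]
    exact (hDgc.comp_continuousOn hQcont).clm_apply hAPcont
  have hG'bd : ∀ s ∈ Set.Icc (0:ℝ) h, ∀ t ∈ Set.Icc (0:ℝ) h, ‖G' s - G' t‖ ≤ Lc * h := by
    intro s hs t ht
    have hsplit : G' s - G' t
        = (Dg (Q s) - Dg (Q t)) (A (P s)) + (Dg (Q t)) (A (P s) - A (P t)) := by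
      simp only [hG'def, ContinuousLinearMap.sub_apply, map_sub]
      abel
    rw [hsplit]
    have hst : ‖s - t‖ ≤ h := by
      rw [Real.norm_eq_abs, abs_sub_le_iff]
      constructor <;> linarith [hs.1, hs.2, ht.1, ht.2]
    have e1 : ‖(Dg (Q s) - Dg (Q t)) (A (P s))‖ ≤ (K * a^2 * B^2) * h := by
      calc ‖(Dg (Q s) - Dg (Q t)) (A (P s))‖
          ≤ ‖Dg (Q s) - Dg (Q t)‖ * ‖A (P s)‖ := ContinuousLinearMap.le_opNorm _ _
        _ ≤ (K * ‖Q s - Q t‖) * (a * B) := by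
            refine mul_le_mul (hDg_lip _ _) ?_ (norm_nonneg _) ?_
            · exact (hAop _).trans (mul_le_mul_of_nonneg_left (hPb s hs) ha0)
            · positivity
        _ ≤ (K * ((a*B) * ‖s - t‖)) * (a*B) :=
            mul_le_mul_of_nonneg_right
              (mul_le_mul_of_nonneg_left (hQdiff s hs t ht) hK.le) (by positivity)
        _ ≤ (K * ((a*B) * h)) * (a*B) :=
            mul_le_mul_of_nonneg_right
              (mul_le_mul_of_nonneg_left
                (mul_le_mul_of_nonneg_left hst (by positivity)) hK.le) (by positivity)
        _ = (K * a^2 * B^2) * h := by ring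
    have e2 : ‖(Dg (Q t)) (A (P s) - A (P t))‖ ≤ (K^2 * a) * h := by
      calc ‖(Dg (Q t)) (A (P s) - A (P t))‖
          ≤ ‖Dg (Q t)‖ * ‖A (P s) - A (P t)‖ := ContinuousLinearMap.le_opNorm _ _
        _ ≤ K * (a * ‖P s - P t‖) := by
            refine mul_le_mul (hDg_bd _) ?_ (norm_nonneg _) hK.le
            rw [← map_sub]
            exact hAop _
        _ ≤ K * (a * (K * ‖s - t‖)) :=
            mul_le_mul_of_nonneg_left
              (mul_le_mul_of_nonneg_left (hPdiff s hs t ht) ha0) hK.le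
        _ ≤ K * (a * (K * h)) :=
            mul_le_mul_of_nonneg_left
              (mul_le_mul_of_nonneg_left
                (mul_le_mul_of_nonneg_left hst hK.le) ha0) hK.le
        _ = (K^2 * a) * h := by ring
    calc ‖(Dg (Q s) - Dg (Q t)) (A (P s)) + (Dg (Q t)) (A (P s) - A (P t))‖
        ≤ ‖(Dg (Q s) - Dg (Q t)) (A (P s))‖ + ‖(Dg (Q t)) (A (P s) - A (P t))‖ :=
          norm_add_le _ _
      _ ≤ (K * a^2 * B^2) * h + (K^2 * a) * h := add_le_add e1 e2
      _ = Lc * h := by rw [hLc]; ring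
  have hGFTC : ∀ t ∈ Set.Icc (0:ℝ) h,
      ∫ s in (0:ℝ)..t, G' s = grad U (Q t) - grad U q := by
    intro t ht
    have hsub : Set.uIcc (0:ℝ) t ⊆ Set.Icc (0:ℝ) h := by
      rw [Set.uIcc_of_le ht.1]; exact Set.Icc_subset_Icc le_rfl ht.2
    have hftc := intervalIntegral.integral_eq_sub_of_hasDerivAt
      (fun s hs => hG s (hsub hs)) ((hG'cont.mono hsub).intervalIntegrable)
    rw [hQ0] at hftc
    exact hftc
  -- the auxiliary function φ
  obtain ⟨φ, hφdef⟩ : ∃ f : ℝ → (Fin ν → ℝ),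
      f = fun t => (p - P t) - (t/2) • (grad U q + grad U (Q t)) := ⟨_, rfl⟩
  obtain ⟨φ', hφ'def⟩ : ∃ f : ℝ → (Fin ν → ℝ),
      f = fun t => grad U (Q t) - ((t/2) • G' t + ((1:ℝ)/2) • (grad U q + grad U (Q t))) := ⟨_, rfl⟩
  have hφderiv : ∀ t ∈ Set.Icc (0:ℝ) h, HasDerivAt φ (φ' t) t := by
    intro t ht
    have h1 : HasDerivAt (fun u => p - P u) (grad U (Q t)) t := by
      have h0 := (hP t ht).const_sub p
      rw [neg_neg] at h0
      exact h0
    have hc : HasDerivAt (fun u : ℝ => u/2) ((1:ℝ)/2) t := (hasDerivAt_id t).div_const 2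
    have hv : HasDerivAt (fun u => grad U q + grad U (Q u)) (G' t) t := (hG t ht).const_add _
    have h2 := hc.smul hv
    have h3 := h1.sub h2
    simp only [hφdef, hφ'def]
    exact h3
  have hφ'eq : ∀ t ∈ Set.Icc (0:ℝ) h,
      φ' t = (1/2 : ℝ) • ((grad U (Q t) - grad U q) - t • G' t) := by
    intro t ht
    simp only [hφ'def]
    module
  have hφ'bd : ∀ t ∈ Set.Icc (0:ℝ) h, ‖φ' t‖ ≤ Lc * h * h := by
    intro t ht
    have hsub : Set.uIcc (0:ℝ) t ⊆ Set.Icc (0:ℝ) h := by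
      rw [Set.uIcc_of_le ht.1]; exact Set.Icc_subset_Icc le_rfl ht.2
    have i1 : IntervalIntegrable G' volume 0 t := (hG'cont.mono hsub).intervalIntegrable
    have hker : (grad U (Q t) - grad U q) - t • G' t
        = ∫ s in (0:ℝ)..t, (G' s - G' t) := by
      rw [intervalIntegral.integral_sub i1 intervalIntegrable_const,
        hGFTC t ht, intervalIntegral.integral_const, sub_zero]
    have hbint : ‖∫ s in (0:ℝ)..t, (G' s - G' t)‖ ≤ (Lc * h) * |t - 0| := by
      refine intervalIntegral.norm_integral_le_of_norm_le_const (fun s hs => ?_)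
      rw [Set.uIoc_of_le ht.1] at hs
      exact hG'bd s ⟨hs.1.le, hs.2.trans ht.2⟩ t ht
    have h4 : |t - 0| ≤ h := by rw [sub_zero, abs_of_nonneg ht.1]; exact ht.2
    rw [hφ'eq t ht, hker, norm_smul]
    have h5 : ‖(1/2 : ℝ)‖ = 1/2 := by rw [Real.norm_eq_abs]; norm_num
    rw [h5]
    calc (1/2 : ℝ) * ‖∫ s in (0:ℝ)..t, (G' s - G' t)‖
        ≤ (1/2 : ℝ) * ((Lc * h) * |t - 0|) := by
          exact mul_le_mul_of_nonneg_left hbint (by norm_num)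
      _ ≤ (1/2 : ℝ) * ((Lc * h) * h) := by
          refine mul_le_mul_of_nonneg_left (mul_le_mul_of_nonneg_left h4 ?_) (by norm_num)
          positivity
      _ ≤ Lc * h * h := by nlinarith [mul_nonneg (mul_nonneg hLc0 hh0') hh0']
  have hφbound : ‖φ h - φ 0‖ ≤ (Lc * h * h) * h := by
    have hm := Convex.norm_image_sub_le_of_norm_hasDerivWithin_le
      (fun u hu => (hφderiv u hu).hasDerivWithinAt) (fun u hu => hφ'bd u hu)
      (convex_Icc 0 h) h0mem hhmem
    rw [sub_zero, Real.norm_eq_abs, abs_of_nonneg hh0'] at hm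
    exact hm
  have hφ0 : φ 0 = 0 := by
    simp [hφdef, hP0]
  -- the momentum error
  have hkey2 : p1 - P h = (φ h - φ 0) + (h/2) • (grad U (Q h) - grad U q1) := by
    rw [hφ0, sub_zero, hp1, hphalf]
    simp only [hφdef]
    module
  have hcomp2 : ‖p1 - P h‖ ≤ (Lc + K^2 * a^2 * B) * h^3 := by
    rw [hkey2]
    have t1 : ‖φ h - φ 0‖ ≤ Lc * h^3 := by
      calc ‖φ h - φ 0‖ ≤ (Lc * h * h) * h := hφbound
        _ = Lc * h^3 := by ring
    have t2 : ‖(h/2) • (grad U (Q h) - grad U q1)‖ ≤ (K^2 * a^2 * B) * h^3 := by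
      rw [norm_smul, Real.norm_eq_abs, abs_of_nonneg (by linarith : (0:ℝ) ≤ h/2)]
      have l1 : ‖grad U (Q h) - grad U q1‖ ≤ K * ‖Q h - q1‖ := hg_lip _ _
      have l2 : ‖Q h - q1‖ = ‖q1 - Q h‖ := norm_sub_rev _ _
      have hnn : (0:ℝ) ≤ K^2 * a^2 * B * h^3 := by positivity
      have hh2 : h/2 ≤ 1 := by linarith
      calc (h/2) * ‖grad U (Q h) - grad U q1‖
          ≤ (h/2) * (K * ((K * a^2 * B) * h^3)) := by
            refine mul_le_mul_of_nonneg_left ?_ (by linarith)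
            refine l1.trans (mul_le_mul_of_nonneg_left ?_ hK.le)
            rw [l2]; exact hcomp1
        _ = (K^2 * a^2 * B * h^3) * (h/2) := by ring
        _ ≤ (K^2 * a^2 * B * h^3) * 1 := mul_le_mul_of_nonneg_left hh2 hnn
        _ = (K^2 * a^2 * B) * h^3 := by ring
    calc ‖(φ h - φ 0) + (h/2) • (grad U (Q h) - grad U q1)‖
        ≤ ‖φ h - φ 0‖ + ‖(h/2) • (grad U (Q h) - grad U q1)‖ := norm_add_le _ _
      _ ≤ Lc * h^3 + (K^2 * a^2 * B) * h^3 := add_le_add t1 t2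
      _ = (Lc + K^2 * a^2 * B) * h^3 := by ring
  -- putting everything together
  have hfinal : verlet h M U (q, p) - (Q h, P h) = (q1 - Q h, p1 - P h) := by
    rw [hver]; rfl
  rw [hfinal, Prod.norm_def]
  have hh3 : (0:ℝ) ≤ h^3 := by positivity
  refine max_le ?_ ?_
  · refine hcomp1.trans ?_
    refine mul_le_mul_of_nonneg_right ?_ hh3
    have h1 : (0:ℝ) ≤ K^2 * a^2 * B := by positivity
    linarith
  · refine hcomp2.trans ?_
    refine mul_le_mul_of_nonneg_right ?_ hh3
    have h1 : (0:ℝ) ≤ K * a^2 * B := by positivity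
    linarith
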